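/- arXiv:2402.08818 — 8 statements merged into one kernel-verified Lean document; each statement's English description precedes it below -/
import Mathlib

section
/- Let E : ℝⁿ → ℝ be twice continuously differentiable with gradient g, and let U ⊆ ℝⁿ be an open corridor for E. If θ ∈ U and the segment {θ - s • g(θ) : s ∈ [0, t]} lies in U, then the gradient is constant along this line of steepest descent: g(θ - t • g(θ)) = g(θ). -/
/-- An open set `U ⊆ ℝⁿ` is a *corridor* for `E` if every solution of the gradient flow
`θ'(t) = -∇E(θ(t))` whose image lies in `U` is a straight line traveled at constant speed,
i.e. satisfies `θ(t) = θ(a) + (t - a) • v` for some fixed vector `v`. -/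
def IsCorridor {n : ℕ} (E : EuclideanSpace ℝ (Fin n) → ℝ)
    (U : Set (EuclideanSpace ℝ (Fin n))) : Prop :=
  ∀ (a b : ℝ), a ≤ b → ∀ θ : ℝ → EuclideanSpace ℝ (Fin n),
    (∀ t ∈ Set.Icc a b, HasDerivAt θ (-(gradient E (θ t))) t) →
    (∀ t ∈ Set.Icc a b, θ t ∈ U) →
    ∃ v : EuclideanSpace ℝ (Fin n), ∀ t ∈ Set.Icc a b, θ t = θ a + (t - a) • v

open Set in
lemma contDiff_gradient_aux {n : ℕ} (E : EuclideanSpace ℝ (Fin n) → ℝ)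
    (hE : ContDiff ℝ 2 E) : ContDiff ℝ 1 (gradient E) :=
  (InnerProductSpace.toDual ℝ (EuclideanSpace ℝ (Fin n))).symm.contDiff.comp
    (hE.fderiv_right (by norm_num))

lemma key_local {n : ℕ}
    (E : EuclideanSpace ℝ (Fin n) → ℝ) (hE : ContDiff ℝ 2 E)
    (U : Set (EuclideanSpace ℝ (Fin n))) (hU : IsOpen U) (hcor : IsCorridor E U)
    (θ : EuclideanSpace ℝ (Fin n)) (s₀ : ℝ)
    (hp : θ - s₀ • gradient E θ ∈ U)
    (hgp : gradient E (θ - s₀ • gradient E θ) = gradient E θ) :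
    ∃ δ > 0, ∀ s ∈ Metric.ball s₀ δ,
      gradient E (θ - s • gradient E θ) = gradient E θ := by
  set G := gradient E θ with hG
  set p := θ - s₀ • G with hpdef
  have hv : ContDiff ℝ 1 (fun x => -(gradient E x)) := (contDiff_gradient_aux E hE).neg
  obtain ⟨f, hf0, ε, hε, hf⟩ :=
    ContDiffAt.exists_forall_mem_closedBall_exists_eq_forall_mem_Ioo_hasDerivAt₀ (x₀ := p) hv.contDiffAt s₀
  have hcont : ContinuousAt f s₀ :=
    (hf s₀ ⟨by linarith, by linarith⟩).continuousAt
  have hmem : f ⁻¹' U ∈ nhds s₀ := hcont (hU.mem_nhds (hf0 ▸ hp))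
  obtain ⟨δ, hδ, hball⟩ := Metric.mem_nhds_iff.mp
    (Filter.inter_mem hmem (Ioo_mem_nhds (show s₀ - ε < s₀ by linarith)
      (show s₀ < s₀ + ε by linarith)))
  have hsub : Set.Icc (s₀ - δ/2) (s₀ + δ/2) ⊆ Metric.ball s₀ δ := by
    intro u hu
    rw [Metric.mem_ball, Real.dist_eq, abs_sub_lt_iff]
    exact ⟨by linarith [hu.2], by linarith [hu.1]⟩
  have hderiv : ∀ u ∈ Set.Icc (s₀ - δ/2) (s₀ + δ/2), HasDerivAt f (-(gradient E (f u))) u :=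
    fun u hu => hf u (hball (hsub hu)).2
  have hinU : ∀ u ∈ Set.Icc (s₀ - δ/2) (s₀ + δ/2), f u ∈ U := fun u hu => (hball (hsub hu)).1
  obtain ⟨v, hline⟩ := hcor (s₀ - δ/2) (s₀ + δ/2) (by linarith) f hderiv hinU
  have haff : ∀ u ∈ Set.Ioo (s₀ - δ/2) (s₀ + δ/2), HasDerivAt f v u := by
    intro u hu
    have h1 : HasDerivAt (fun s : ℝ => f (s₀ - δ/2) + (s - (s₀ - δ/2)) • v) v u := by
      have := (((hasDerivAt_id u).sub_const (s₀ - δ/2)).smul_const v).const_add (f (s₀ - δ/2))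
      simpa using this
    exact h1.congr_of_eventuallyEq
      (Filter.eventuallyEq_of_mem (Icc_mem_nhds hu.1 hu.2) fun x hx => hline x hx)
  have hs₀Ioo : s₀ ∈ Set.Ioo (s₀ - δ/2) (s₀ + δ/2) := ⟨by linarith, by linarith⟩
  have hveq : v = -G := by
    have h1 := (haff s₀ hs₀Ioo).unique (hderiv s₀ (Set.Ioo_subset_Icc_self hs₀Ioo))
    rw [hf0, hgp] at h1
    exact h1
  refine ⟨δ/2, by linarith, fun s hs => ?_⟩
  have hsIoo : s ∈ Set.Ioo (s₀ - δ/2) (s₀ + δ/2) := by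
    rw [Metric.mem_ball, Real.dist_eq, abs_sub_lt_iff] at hs
    exact ⟨by linarith [hs.2], by linarith [hs.1]⟩
  have h1 := hline s (Set.Ioo_subset_Icc_self hsIoo)
  have h2 := hline s₀ (Set.Ioo_subset_Icc_self hs₀Ioo)
  rw [hf0] at h2
  rw [hveq] at h1 h2
  have hfs : f s = θ - s • G := by
    rw [h1]
    have h3 : f (s₀ - δ/2) = p - (s₀ - (s₀ - δ/2)) • (-G) := by
      rw [h2]; module
    rw [h3, hpdef]
    module
  have h4 := (haff s hsIoo).unique (hderiv s (Set.Ioo_subset_Icc_self hsIoo))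
  rw [hfs, hveq] at h4
  exact (neg_injective h4).symm


/-- Let `U` be an open corridor for a twice continuously differentiable
loss `E` with gradient `g`. If `θ ∈ U` and the segment `{θ - s • g(θ) : s ∈ [0, t]}` lies in
`U`, then the gradient is constant along this line of steepest descent:
`g(θ - t • g(θ)) = g(θ)`. -/
theorem gradient_constant_on_steepest_descent_line {n : ℕ}
    (E : EuclideanSpace ℝ (Fin n) → ℝ) (hE : ContDiff ℝ 2 E)
    (U : Set (EuclideanSpace ℝ (Fin n))) (hU : IsOpen U) (hcor : IsCorridor E U)
    (θ : EuclideanSpace ℝ (Fin n)) (hθ : θ ∈ U)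
    (t : ℝ) (ht : 0 ≤ t)
    (hseg : ∀ s ∈ Set.Icc (0 : ℝ) t, θ - s • gradient E θ ∈ U) :
    gradient E (θ - t • gradient E θ) = gradient E θ := by
  set A : Set ℝ := {s : ℝ | gradient E (θ - s • gradient E θ) = gradient E θ} with hA
  suffices h : Set.Icc (0 : ℝ) t ⊆ A from h ⟨ht, le_refl t⟩
  -- continuity of s ↦ gradient E (θ - s • gradient E θ)
  have hFcont : Continuous fun s : ℝ => gradient E (θ - s • gradient E θ) :=
    (contDiff_gradient_aux E hE).continuous.comp
      (continuous_const.sub (continuous_id.smul continuous_const))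
  have hAclosed : IsClosed A := by
    have : A = (fun s : ℝ => gradient E (θ - s • gradient E θ)) ⁻¹' {gradient E θ} := rfl
    rw [this]
    exact isClosed_singleton.preimage hFcont
  -- work inside the connected subtype Icc 0 t
  haveI : PreconnectedSpace (Set.Icc (0 : ℝ) t) :=
    Subtype.preconnectedSpace isPreconnected_Icc
  set S : Set (Set.Icc (0 : ℝ) t) := Subtype.val ⁻¹' A with hS
  have hSopen : IsOpen S := by
    rw [isOpen_iff_mem_nhds]
    rintro ⟨x, hx⟩ hxS
    obtain ⟨δ, hδ, hball⟩ := key_local E hE U hU hcor θ x (hseg x hx) hxS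
    rw [nhds_subtype_eq_comap]
    exact Filter.mem_comap.mpr ⟨Metric.ball x δ, Metric.ball_mem_nhds x hδ,
      fun y hy => hball _ hy⟩
  have hSclosed : IsClosed S := hAclosed.preimage continuous_subtype_val
  have hSne : S.Nonempty := ⟨⟨0, ⟨le_refl 0, ht⟩⟩, by
    show (0 : ℝ) ∈ A
    simp [hA]⟩
  have : S = Set.univ := IsClopen.eq_univ ⟨hSclosed, hSopen⟩ hSne
  intro s hs
  have : (⟨s, hs⟩ : Set.Icc (0 : ℝ) t) ∈ S := this ▸ Set.mem_univ _
  exact this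
end

section
/- Let E : ℝⁿ → ℝ be twice continuously differentiable with gradient g and Hessian H, and let U ⊆ ℝⁿ be an open set. Then U is a corridor for E if and only if H(θ) g(θ) = 0 for every θ ∈ U. -/
open Set


/-- **Theorem 2.8.** Let `E : ℝⁿ → ℝ` be twice continuously differentiable
with gradient `g` and Hessian `H` (the derivative of the gradient map), and let `U ⊆ ℝⁿ` be
an open set. Then `U` is a corridor for `E` if and only if `H(θ) g(θ) = 0` for every
`θ ∈ U`. -/
theorem isCorridor_iff_hessian_gradient_eq_zero {n : ℕ}
    (E : EuclideanSpace ℝ (Fin n) → ℝ) (hE : ContDiff ℝ 2 E)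
    (U : Set (EuclideanSpace ℝ (Fin n))) (hU : IsOpen U) :
    IsCorridor E U ↔ ∀ θ ∈ U, fderiv ℝ (gradient E) θ (gradient E θ) = 0 := by
  have hg : ContDiff ℝ 1 (gradient E) := by
    have : gradient E = fun x => (InnerProductSpace.toDual ℝ _).symm (fderiv ℝ E x) := rfl
    rw [this]
    exact (InnerProductSpace.toDual ℝ _).symm.contDiff.comp (hE.fderiv_right (le_refl _))
  have hgdiff : Differentiable ℝ (gradient E) := hg.differentiable one_ne_zero
  constructor
  · -- corridor → H g = 0
    intro hcor θ₀ hθ₀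
    -- local solution of the flow
    obtain ⟨f, hf0, ε, hε, hf⟩ :=
      ContDiffAt.exists_forall_mem_closedBall_exists_eq_forall_mem_Ioo_hasDerivAt₀ (f := fun x => -(gradient E x)) (x₀ := θ₀)
        (hg.neg.contDiffAt) 0
    -- f continuous near 0, f 0 = θ₀ ∈ U : find δ with image of [-δ, δ] in U ∩ Ioo
    have hfc : ContinuousAt f 0 := (hf 0 (by constructor <;> simp [hε] <;> linarith)).continuousAt
    have hpre : ∀ᶠ t in nhds (0:ℝ), f t ∈ U := by
      have : U ∈ nhds (f 0) := hU.mem_nhds (hf0 ▸ hθ₀)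
      exact hfc this
    obtain ⟨δ, hδ, hδsub⟩ := Metric.eventually_nhds_iff_ball.mp hpre
    set δ' := min (δ / 2) (ε / 2) with hδ'
    have hδ'0 : 0 < δ' := lt_min (by linarith) (by linarith)
    have hsub : Icc (-δ') δ' ⊆ Metric.ball (0:ℝ) δ := by
      intro t ht
      simp only [Metric.mem_ball, Real.dist_eq, sub_zero]
      have h1 : |t| ≤ δ' := abs_le.mpr ⟨ht.1, ht.2⟩
      have : δ' ≤ δ / 2 := min_le_left _ _
      linarith
    have hsubε : Icc (-δ') δ' ⊆ Ioo (0 - ε) (0 + ε) := by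
      intro t ht
      have h1 : |t| ≤ δ' := abs_le.mpr ⟨ht.1, ht.2⟩
      have h2 : δ' ≤ ε / 2 := min_le_right _ _
      rw [abs_le] at h1
      constructor <;> [linarith; linarith]
    -- apply corridor on [-δ', δ']
    obtain ⟨v, hv⟩ := hcor (-δ') δ' (by linarith) f
      (fun t ht => hf t (hsubε ht))
      (fun t ht => hδsub t (hsub ht))
    -- f agrees with affine map on neighborhood of 0, so derivative of f at 0 is v
    have hfaff : ∀ t ∈ Ioo (-δ') δ', f t = f (-δ') + (t - (-δ')) • v :=
      fun t ht => hv t (Ioo_subset_Icc_self ht)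
    have hmem0 : (0:ℝ) ∈ Ioo (-δ') δ' := ⟨by linarith, hδ'0⟩
    have haff : HasDerivAt (fun t : ℝ => f (-δ') + (t - (-δ')) • v) v 0 := by
      simpa using ((hasDerivAt_id (0:ℝ)).sub_const (-δ')).smul_const v |>.const_add (f (-δ'))
    have hfd : HasDerivAt f v 0 := by
      apply haff.congr_of_eventuallyEq
      filter_upwards [Ioo_mem_nhds hmem0.1 hmem0.2] with t ht
      exact hfaff t ht
    -- also f' 0 = -(g θ₀)
    have hfd2 : HasDerivAt f (-(gradient E (f 0))) 0 := hf 0 (hsubε ⟨by linarith, le_of_lt hδ'0⟩)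
    have hveq : v = -(gradient E θ₀) := by
      rw [← hf0]; exact hfd.unique hfd2
    -- g ∘ f is constant -v on Ioo, so its derivative at 0 is 0
    have hgf : ∀ t ∈ Ioo (-δ') δ', gradient E (f t) = -v := by
      intro t ht
      have haff' : HasDerivAt (fun s : ℝ => f (-δ') + (s - (-δ')) • v) v t := by
        simpa using ((hasDerivAt_id t).sub_const (-δ')).smul_const v |>.const_add (f (-δ'))
      have h1 : HasDerivAt f v t := by
        apply haff'.congr_of_eventuallyEq
        filter_upwards [Ioo_mem_nhds ht.1 ht.2] with s hs using hfaff s hs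
      have h2 : HasDerivAt f (-(gradient E (f t))) t := hf t (hsubε (Ioo_subset_Icc_self ht))
      have := h1.unique h2
      rw [this, neg_neg]
    have hconst : HasDerivAt (fun t => gradient E (f t)) 0 0 := by
      apply (hasDerivAt_const (0:ℝ) (-v)).congr_of_eventuallyEq
      filter_upwards [Ioo_mem_nhds hmem0.1 hmem0.2] with t ht using hgf t ht
    have hcomp : HasDerivAt (fun t => gradient E (f t))
        ((fderiv ℝ (gradient E) (f 0)) (-(gradient E (f 0)))) 0 :=
      (hgdiff (f 0)).hasFDerivAt.comp_hasDerivAt 0 hfd2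
    have := hconst.unique hcomp
    rw [hf0, map_neg] at this
    exact (neg_eq_zero.mp this.symm)
  · -- H g = 0 → corridor
    intro hHg a b hab θ hθ' hθU
    refine ⟨-(gradient E (θ a)), fun t ht => ?_⟩
    -- g ∘ θ is constant on [a,b]
    have hc : ∀ t ∈ Icc a b, gradient E (θ t) = gradient E (θ a) := by
      apply constant_of_has_deriv_right_zero
      · exact fun t ht => (hgdiff.continuous.continuousAt.comp
          (hθ' t ht).continuousAt).continuousWithinAt
      · intro t ht
        have h1 : HasDerivAt (fun s => gradient E (θ s))
            ((fderiv ℝ (gradient E) (θ t)) (-(gradient E (θ t)))) t :=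
          (hgdiff (θ t)).hasFDerivAt.comp_hasDerivAt t (hθ' t (Ico_subset_Icc_self ht))
        have h2 : (fderiv ℝ (gradient E) (θ t)) (-(gradient E (θ t))) = 0 := by
          rw [map_neg, hHg (θ t) (hθU t (Ico_subset_Icc_self ht)), neg_zero]
        exact (h2 ▸ h1).hasDerivWithinAt
    -- θ t - θ a - (t-a) • v has zero derivative
    have key : ∀ t ∈ Icc a b,
        (fun s => θ s - (s - a) • (-(gradient E (θ a)))) t
          = (fun s => θ s - (s - a) • (-(gradient E (θ a)))) a := by
      apply constant_of_has_deriv_right_zero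
      · apply ContinuousOn.sub
        · exact fun t ht => (hθ' t ht).continuousAt.continuousWithinAt
        · fun_prop
      · intro t ht
        have h1 : HasDerivAt (fun s => θ s - (s - a) • (-(gradient E (θ a))))
            (-(gradient E (θ t)) - -(gradient E (θ a))) t := by
          apply (hθ' t (Ico_subset_Icc_self ht)).sub
          simpa using ((hasDerivAt_id t).sub_const a).smul_const (-(gradient E (θ a)))
        rw [hc t (Ico_subset_Icc_self ht), sub_self] at h1
        exact h1.hasDerivWithinAt
    have h := key t ht
    simp only [sub_self, zero_smul, sub_zero] at h
    rw [sub_eq_iff_eq_add] at h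
    rw [h]
end

section
/- Let E : ℝⁿ → ℝ be twice continuously differentiable with gradient g, let U ⊆ ℝⁿ be an open corridor for E, let h > 0 be a learning rate and β ∈ (0,1) a momentum decay rate. Define the heavy-ball momentum iterates by v₀ = 0, v_t = β v_{t-1} - h • g(θ_{t-1}), θ_t = θ_{t-1} + v_t, starting at θ₀ ∈ U. If all iterates θ₀, …, θ_T and the segments between consecutive iterates remain in U, then for every t ≤ T: v_t = -h (1 - β^t)/(1 - β) • g(θ₀) and θ_t = θ₀ - (h/(1 - β)) (∑_{i=1}^{t} (1 - β^i)) • g(θ₀). -/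
open Set InnerProductSpace

noncomputable section


variable {n : ℕ}

lemma gradient_contDiff {E : EuclideanSpace ℝ (Fin n) → ℝ} (hE : ContDiff ℝ 2 E) :
    ContDiff ℝ 1 (fun x => gradient E x) := by
  have h1 : ContDiff ℝ 1 (fderiv ℝ E) := hE.fderiv_right (by norm_num)
  exact ((toDual ℝ (EuclideanSpace ℝ (Fin n))).symm.contDiff).comp h1

lemma corridor_local (E : EuclideanSpace ℝ (Fin n) → ℝ) (hE : ContDiff ℝ 2 E)
    (U : Set (EuclideanSpace ℝ (Fin n))) (hU : IsOpen U) (hcor : IsCorridor E U)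
    (x w : EuclideanSpace ℝ (Fin n)) (s₀ : ℝ)
    (hmem : x - s₀ • w ∈ U) (hgrad : gradient E (x - s₀ • w) = w) :
    ∃ ε > (0 : ℝ), ∀ r : ℝ, |r - s₀| < ε → gradient E (x - r • w) = w := by
  set y := x - s₀ • w with hy
  have hG : ContDiff ℝ 1 (fun z : EuclideanSpace ℝ (Fin n) => -(gradient E z)) :=
    (gradient_contDiff hE).neg
  obtain ⟨f, hf0, ε₁, hε₁, hf⟩ :=
    ContDiffAt.exists_forall_mem_closedBall_exists_eq_forall_mem_Ioo_hasDerivAt₀ (hG.contDiffAt (x := y)) s₀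
  obtain ⟨ρ, hρ, hball⟩ := Metric.isOpen_iff.mp hU y hmem
  have hs₀Ioo : s₀ ∈ Ioo (s₀ - ε₁) (s₀ + ε₁) := ⟨by linarith, by linarith⟩
  have hcont : ContinuousAt f s₀ := (hf s₀ hs₀Ioo).continuousAt
  obtain ⟨ε₂, hε₂, hf2⟩ := Metric.continuousAt_iff.mp hcont ρ hρ
  set ε := min ε₁ ε₂ with hε
  have hε0 : 0 < ε := lt_min hε₁ hε₂
  set a := s₀ - ε / 2 with ha
  set b := s₀ + ε / 2 with hb
  have hab : a ≤ b := by simp only [ha, hb]; linarith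
  have hIoo : Icc a b ⊆ Ioo (s₀ - ε₁) (s₀ + ε₁) := by
    intro t ht
    have h1 : ε ≤ ε₁ := min_le_left _ _
    exact ⟨by have := ht.1; simp only [ha] at this; linarith,
           by have := ht.2; simp only [hb] at this; linarith⟩
  have hderiv : ∀ t ∈ Icc a b, HasDerivAt f (-(gradient E (f t))) t :=
    fun t ht => hf t (hIoo ht)
  have hinU : ∀ t ∈ Icc a b, f t ∈ U := by
    intro t ht
    apply hball
    rw [Metric.mem_ball, ← hf0]
    apply hf2
    have h2 : ε ≤ ε₂ := min_le_right _ _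
    rw [Real.dist_eq, abs_lt]
    constructor
    · have := ht.1; simp only [ha] at this; linarith
    · have := ht.2; simp only [hb] at this; linarith
  obtain ⟨v₁, hv₁⟩ := hcor a b hab f hderiv hinU
  have hs₀ab : s₀ ∈ Ioo a b := ⟨by simp only [ha]; linarith, by simp only [hb]; linarith⟩
  have haff : ∀ t ∈ Ioo a b, HasDerivAt f v₁ t := by
    intro t ht
    have h1 : HasDerivAt (fun t => f a + (t - a) • v₁) v₁ t := by
      simpa using (((hasDerivAt_id t).sub_const a).smul_const v₁).const_add (f a)
    exact h1.congr_of_eventuallyEq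
      (Filter.eventuallyEq_of_mem (Icc_mem_nhds ht.1 ht.2) (fun s hs => hv₁ s hs))
  have hgt : ∀ t ∈ Ioo a b, gradient E (f t) = -v₁ := by
    intro t ht
    have h1 := (hderiv t (Ioo_subset_Icc_self ht)).unique (haff t ht)
    rw [← h1, neg_neg]
  have hv₁w : v₁ = -w := by
    have h1 := hgt s₀ hs₀ab
    rw [hf0, hgrad] at h1
    rw [← neg_neg v₁, ← h1]
  have hfφ : ∀ t ∈ Icc a b, f t = x - t • w := by
    intro t ht
    have h1 := hv₁ t ht
    have h2 := hv₁ s₀ (Ioo_subset_Icc_self hs₀ab)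
    rw [hf0] at h2
    calc f t = f a + (t - a) • v₁ := h1
      _ = (f a + (s₀ - a) • v₁) + (t - s₀) • v₁ := by module
      _ = (x - s₀ • w) + (t - s₀) • (-w) := by rw [← h2, hv₁w, hy]
      _ = x - t • w := by module
  refine ⟨ε / 2, by positivity, fun r hr => ?_⟩
  rw [abs_lt] at hr
  have hrIoo : r ∈ Ioo a b := ⟨by simp only [ha]; linarith, by simp only [hb]; linarith⟩
  have := hgt r hrIoo
  rw [hfφ r (Ioo_subset_Icc_self hrIoo), hv₁w, neg_neg] at this
  exact this

lemma grad_const_on_seg (E : EuclideanSpace ℝ (Fin n) → ℝ) (hE : ContDiff ℝ 2 E)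
    (U : Set (EuclideanSpace ℝ (Fin n))) (hU : IsOpen U) (hcor : IsCorridor E U)
    (x : EuclideanSpace ℝ (Fin n)) (δ : ℝ) (hδ : 0 ≤ δ)
    (hsub : ∀ s ∈ Icc (0 : ℝ) δ, x - s • gradient E x ∈ U) :
    ∀ s ∈ Icc (0 : ℝ) δ, gradient E (x - s • gradient E x) = gradient E x := by
  set w := gradient E x with hw
  set C := {s : ℝ | gradient E (x - s • w) = w} with hC
  have hCclosed : IsClosed C := by
    have hcont : Continuous fun s : ℝ => gradient E (x - s • w) :=
      ((gradient_contDiff hE).continuous).comp (continuous_const.sub (continuous_id.smul continuous_const))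
    exact isClosed_eq hcont continuous_const
  have h0C : (0 : ℝ) ∈ C := by simp [hC, hw]
  set B := {s : ℝ | s ∈ Icc (0 : ℝ) δ ∧ Icc (0 : ℝ) s ⊆ C} with hB
  have h0B : (0 : ℝ) ∈ B := by
    refine ⟨⟨le_refl 0, hδ⟩, fun r hr => ?_⟩
    have : r = 0 := le_antisymm hr.2 hr.1
    rw [this]; exact h0C
  have hBdd : BddAbove B := ⟨δ, fun s hs => hs.1.2⟩
  have hBne : B.Nonempty := ⟨0, h0B⟩
  set S := sSup B with hS
  have hS0 : 0 ≤ S := le_csSup hBdd h0B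
  have hSδ : S ≤ δ := csSup_le hBne fun s hs => hs.1.2
  have hIco : Ico (0 : ℝ) S ⊆ C := by
    intro r hr
    obtain ⟨s, hsB, hrs⟩ := exists_lt_of_lt_csSup hBne hr.2
    exact hsB.2 ⟨hr.1, hrs.le⟩
  have hSC : S ∈ C := by
    rcases eq_or_lt_of_le hS0 with he | hl
    · rw [← he]; exact h0C
    · have h1 : S ∈ closure (Ico (0 : ℝ) S) := by
        rw [closure_Ico hl.ne]; exact ⟨hS0, le_refl S⟩
      exact hCclosed.closure_subset ((closure_mono hIco) h1)
  have hSB : S ∈ B := by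
    refine ⟨⟨hS0, hSδ⟩, fun r hr => ?_⟩
    rcases eq_or_lt_of_le hr.2 with he | hl
    · rw [he]; exact hSC
    · exact hIco ⟨hr.1, hl⟩
  have hSeq : S = δ := by
    by_contra hne
    have hlt : S < δ := lt_of_le_of_ne hSδ hne
    obtain ⟨ε, hε, hloc⟩ :=
      corridor_local E hE U hU hcor x w S (hsub S ⟨hS0, hSδ⟩) hSC
    set S' := min δ (S + ε / 2) with hS'
    have h1 : S < S' := lt_min hlt (by linarith)
    have hS'B : S' ∈ B := by
      refine ⟨⟨le_trans hS0 h1.le, min_le_left _ _⟩, fun r hr => ?_⟩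
      rcases le_or_gt r S with h2 | h2
      · exact hSB.2 ⟨hr.1, h2⟩
      · apply hloc
        rw [abs_lt]
        have h3 : r ≤ S' := hr.2
        have h4 : S' ≤ S + ε / 2 := min_le_right _ _
        constructor <;> linarith
    exact absurd (le_csSup hBdd hS'B) (not_le.mpr h1)
  intro s hs
  exact hSB.2 (hSeq ▸ hs)


/-- **Momentum in corridors, Lemma A.1.** Let `U` be an open corridor for
`E`, `h > 0` a learning rate and `β ∈ (0,1)` a momentum decay rate. Define the heavy-ball
momentum iterates `v₀ = 0`, `v_t = β v_{t-1} - h • g(θ_{t-1})`, `θ_t = θ_{t-1} + v_t`,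
starting at `θ₀ ∈ U`. If all iterates `θ₀, …, θ_T` and the segments between consecutive
iterates remain in `U`, then for every `t ≤ T`:
`v_t = -h (1 - β^t)/(1 - β) • g(θ₀)` and
`θ_t = θ₀ - (h/(1 - β)) (∑_{i=1}^{t} (1 - β^i)) • g(θ₀)`. -/
theorem momentum_in_corridor {n : ℕ}
    (E : EuclideanSpace ℝ (Fin n) → ℝ) (hE : ContDiff ℝ 2 E)
    (U : Set (EuclideanSpace ℝ (Fin n))) (hU : IsOpen U) (hcor : IsCorridor E U)
    (h β : ℝ) (hh : 0 < h) (hβ : β ∈ Set.Ioo (0 : ℝ) 1)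
    (θ₀ : EuclideanSpace ℝ (Fin n)) (hθ₀ : θ₀ ∈ U)
    (v θs : ℕ → EuclideanSpace ℝ (Fin n))
    (hv0 : v 0 = 0) (hθs0 : θs 0 = θ₀)
    (hv : ∀ t : ℕ, v (t + 1) = β • v t - h • gradient E (θs t))
    (hθs : ∀ t : ℕ, θs (t + 1) = θs t + v (t + 1))
    (T : ℕ)
    (hmem : ∀ t ≤ T, θs t ∈ U)
    (hseg : ∀ t < T, ∀ s ∈ Set.Icc (0 : ℝ) 1, θs t + s • (θs (t + 1) - θs t) ∈ U) :
    ∀ t ≤ T,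
      v t = -(h * (1 - β ^ t) / (1 - β)) • gradient E θ₀ ∧
      θs t = θ₀ - (h / (1 - β) * ∑ i ∈ Finset.Icc 1 t, (1 - β ^ i)) • gradient E θ₀ := by
  obtain ⟨hβ0, hβ1⟩ := hβ
  have hβne : (1 : ℝ) - β ≠ 0 := by linarith
  set g₀ := gradient E θ₀ with hg₀
  have key : ∀ t, t ≤ T →
      (v t = -(h * (1 - β ^ t) / (1 - β)) • g₀ ∧
       θs t = θ₀ - (h / (1 - β) * ∑ i ∈ Finset.Icc 1 t, (1 - β ^ i)) • g₀ ∧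
       gradient E (θs t) = g₀) := by
    intro t
    induction t with
    | zero =>
      intro _
      refine ⟨by simp [hv0], by simp [hθs0], by rw [hθs0]⟩
    | succ t IH =>
      intro ht
      obtain ⟨IHv, IHθ, IHg⟩ := IH (le_trans (Nat.le_succ t) ht)
      have htT : t < T := Nat.lt_of_succ_le ht
      set d := h * (1 - β ^ (t + 1)) / (1 - β) with hd
      have hβpow : β ^ (t + 1) < 1 := pow_lt_one₀ hβ0.le hβ1 (Nat.succ_ne_zero t)
      have hd0 : 0 < d := div_pos (mul_pos hh (by linarith)) (by linarith)
      -- velocity formula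
      have hscal : β * -(h * (1 - β ^ t) / (1 - β)) - h
          = -(h * (1 - β ^ (t + 1)) / (1 - β)) := by
        field_simp
        ring
      have hvfor : v (t + 1) = -d • g₀ := by
        rw [hv t, IHv, IHg, smul_smul, ← sub_smul, hscal, hd]
      -- position formula
      have hsum : h / (1 - β) * ∑ i ∈ Finset.Icc 1 (t + 1), (1 - β ^ i) =
          h / (1 - β) * (∑ i ∈ Finset.Icc 1 t, (1 - β ^ i)) + d := by
        rw [Finset.sum_Icc_succ_top (Nat.succ_le_succ (Nat.zero_le t)), hd]
        field_simp
      have hθfor : θs (t + 1) =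
          θ₀ - (h / (1 - β) * ∑ i ∈ Finset.Icc 1 (t + 1), (1 - β ^ i)) • g₀ := by
        rw [hθs t, IHθ, hvfor, hsum]
        module
      refine ⟨hvfor, hθfor, ?_⟩
      -- gradient constancy along the segment
      have hdiff : θs (t + 1) - θs t = -d • g₀ := by rw [hθs t, hvfor]; abel
      have hsub : ∀ s ∈ Icc (0 : ℝ) d, θs t - s • gradient E (θs t) ∈ U := by
        intro s hs
        have hr : s / d ∈ Icc (0 : ℝ) 1 :=
          ⟨div_nonneg hs.1 hd0.le, (div_le_one hd0).mpr hs.2⟩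
        have := hseg t htT (s / d) hr
        rw [hdiff] at this
        have heq : θs t + (s / d) • (-d • g₀) = θs t - s • gradient E (θs t) := by
          rw [IHg, smul_smul]
          have : s / d * -d = -s := by field_simp
          rw [this]
          module
        rwa [heq] at this
      have hres := grad_const_on_seg E hE U hU hcor (θs t) d hd0.le hsub d
        ⟨hd0.le, le_refl d⟩
      have heq2 : θs t - d • gradient E (θs t) = θs (t + 1) := by
        rw [IHg, hθs t, hvfor]
        module
      rw [heq2, IHg] at hres
      exact hres
  intro t ht
  exact ⟨(key t ht).1, (key t ht).2.1⟩

end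
end

section
/- Let E : ℝ → ℝ be twice continuously differentiable, v ∈ ℝ, T > 0, and suppose the straight line θ(t) = θ₀ + t v satisfies the gradient flow equation θ'(t) = -E'(θ(t)) for all t ∈ [0, T]. Then E' is constant (equal to -v) on the segment between θ₀ and θ₀ + T v, and hence E is affine on that segment: E(θ₀ + t v) = E(θ₀) - t v² for all t ∈ [0, T]. -/
/-- **In dimension one, corridors are linear pieces, Example 2.1.** Let
`E : ℝ → ℝ` be twice continuously differentiable, `v ∈ ℝ`, `T > 0`, and suppose the
straight line `θ(t) = θ₀ + t v` satisfies the gradient flow equation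
`θ'(t) = -E'(θ(t))` for all `t ∈ [0, T]`. Then `E'` is constant (equal to `-v`) on the
segment between `θ₀` and `θ₀ + T v`, and hence `E` is affine on that segment:
`E(θ₀ + t v) = E(θ₀) - t v²` for all `t ∈ [0, T]`. -/
theorem one_dim_corridor_is_linear
    (E : ℝ → ℝ) (hE : ContDiff ℝ 2 E)
    (θ₀ v T : ℝ) (hT : 0 < T)
    (hflow : ∀ t ∈ Set.Icc (0 : ℝ) T,
      HasDerivAt (fun s : ℝ => θ₀ + s * v) (-(deriv E (θ₀ + t * v))) t) :
    (∀ t ∈ Set.Icc (0 : ℝ) T, deriv E (θ₀ + t * v) = -v) ∧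
    (∀ t ∈ Set.Icc (0 : ℝ) T, E (θ₀ + t * v) = E θ₀ - t * v ^ 2) := by
  have hEdiff : Differentiable ℝ E := hE.differentiable (by norm_num)
  have h1 : ∀ t ∈ Set.Icc (0 : ℝ) T, deriv E (θ₀ + t * v) = -v := by
    intro t ht
    have hline : HasDerivAt (fun s : ℝ => θ₀ + s * v) v t := by
      simpa using ((hasDerivAt_id t).mul_const v).const_add θ₀
    have := (hflow t ht).unique hline
    linarith
  refine ⟨h1, ?_⟩
  set F : ℝ → ℝ := fun t => E (θ₀ + t * v) + t * v ^ 2 with hF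
  have hFd : ∀ t ∈ Set.Ico (0 : ℝ) T, HasDerivWithinAt F 0 (Set.Ici t) t := by
    intro t ht'
    have ht : t ∈ Set.Icc (0:ℝ) T := Set.Ico_subset_Icc_self ht'
    have hline : HasDerivAt (fun s : ℝ => θ₀ + s * v) v t := by
      simpa using ((hasDerivAt_id t).mul_const v).const_add θ₀
    have hc : HasDerivAt (fun s : ℝ => E (θ₀ + s * v))
        (deriv E (θ₀ + t * v) * v) t :=
      ((hEdiff (θ₀ + t * v)).hasDerivAt).comp t hline
    have h2 : HasDerivAt F (deriv E (θ₀ + t * v) * v + v ^ 2) t := by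
      have h3 := hc.add ((hasDerivAt_id t).mul_const (v ^ 2))
      simp only [id, one_mul] at h3
      exact h3
    rw [h1 t ht] at h2
    have : (-v) * v + v ^ 2 = 0 := by ring
    rw [this] at h2
    exact h2.hasDerivWithinAt
  have hFc : ContinuousOn F (Set.Icc 0 T) := by
    apply ContinuousOn.add
    · exact (hEdiff.continuous.comp (by continuity)).continuousOn
    · exact (continuous_id.mul continuous_const).continuousOn
  have hconst := constant_of_has_deriv_right_zero hFc hFd
  intro t ht
  have := hconst t ht
  simp only [hF] at this
  simp at this
  linarith
end

section
/- Let E : ℝⁿ → ℝ be twice continuously differentiable with gradient g, and let U ⊆ ℝⁿ be an open corridor for E. Then the gradient of the squared gradient norm vanishes on U: for every θ ∈ U, ∇(‖g(·)‖²)(θ) = 0. (This is the statement that the implicit gradient-norm regularizer 2 H(θ) g(θ) = ∇‖g(θ)‖² has no effect inside corridors.) -/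
open InnerProductSpace Set

/-- **No implicit gradient-norm regularization in corridors.** Let `U` be an
open corridor for a twice continuously differentiable loss `E` with gradient `g`. Then the
gradient of the squared gradient norm vanishes on `U`: for every `θ ∈ U`,
`∇(‖g(·)‖²)(θ) = 0`. (The implicit gradient-norm regularizer `2 H(θ) g(θ) = ∇‖g(θ)‖²` has
no effect inside corridors.) -/
theorem implicit_regularizer_vanishes_in_corridor {n : ℕ}
    (E : EuclideanSpace ℝ (Fin n) → ℝ) (hE : ContDiff ℝ 2 E)
    (U : Set (EuclideanSpace ℝ (Fin n))) (hU : IsOpen U) (hcor : IsCorridor E U) :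
    ∀ θ ∈ U, gradient (fun x => ‖gradient E x‖ ^ 2) θ = 0 := by
  intro θ₀ hθ₀
  let P := EuclideanSpace ℝ (Fin n)
  -- gradient E is C¹
  have hg1 : ContDiff ℝ 1 (gradient E) :=
    (toDual ℝ P).symm.contDiff.comp (hE.fderiv_right (m := 1) (by norm_num))
  -- local solution of the gradient flow through θ₀
  obtain ⟨f, hf0, ε, hε, hf⟩ :=
    ContDiffAt.exists_forall_mem_closedBall_exists_eq_forall_mem_Ioo_hasDerivAt₀ (f := fun x => -(gradient E x)) (x₀ := θ₀)
      (hg1.neg.contDiffAt) (0 : ℝ)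
  -- continuity of f at 0, to keep it inside U
  have hfc : ContinuousAt f 0 := (hf 0 (by constructor <;> linarith)).continuousAt
  have hUnhds : U ∈ nhds (f 0) := hU.mem_nhds (hf0 ▸ hθ₀)
  obtain ⟨δ', hδ', hδU⟩ := Metric.eventually_nhds_iff_ball.mp (hfc.preimage_mem_nhds hUnhds)
  set δ : ℝ := min (δ' / 2) (ε / 2) with hδdef
  have hδpos : 0 < δ := lt_min (by linarith) (by linarith)
  have hsub : Set.Icc (-δ) δ ⊆ Set.Ioo (0 - ε) (0 + ε) := by
    intro t ht
    have h1 := ht.1; have h2 := ht.2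
    have : δ ≤ ε / 2 := min_le_right _ _
    constructor <;> simp only [zero_sub, zero_add] <;> linarith
  have hderiv : ∀ t ∈ Set.Icc (-δ) δ, HasDerivAt f (-(gradient E (f t))) t :=
    fun t ht => hf t (hsub ht)
  have hmem : ∀ t ∈ Set.Icc (-δ) δ, f t ∈ U := by
    intro t ht
    apply hδU
    have : δ ≤ δ' / 2 := min_le_left _ _
    simp only [Metric.mem_ball, Real.dist_eq, sub_zero]
    rcases ht with ⟨h1, h2⟩
    rw [abs_lt]; constructor <;> linarith
  -- corridor: f is a straight line
  obtain ⟨v, hv⟩ := hcor (-δ) δ (by linarith) f hderiv hmem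
  -- on the interior, the flow derivative equals v, so gradient E (f t) = -v
  have key : ∀ t ∈ Set.Ioo (-δ) δ, gradient E (f t) = -v := by
    intro t ht
    have hline : HasDerivAt (fun s : ℝ => f (-δ) + (s - (-δ)) • v) v t := by
      have : HasDerivAt (fun s : ℝ => (s - (-δ)) • v) v t := by
        simpa using ((hasDerivAt_id t).sub_const (-δ)).smul_const v
      simpa using this.const_add (f (-δ))
    have heq : f =ᶠ[nhds t] (fun s : ℝ => f (-δ) + (s - (-δ)) • v) := by
      filter_upwards [Icc_mem_nhds ht.1 ht.2] with s hs using hv s hs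
    have hft : HasDerivAt f v t := hline.congr_of_eventuallyEq heq
    have := hft.unique (hderiv t (Ioo_subset_Icc_self ht))
    rw [this]; simp
  -- gradient E (f ·) is locally constant at 0, so its derivative vanishes
  have hmem0 : (0 : ℝ) ∈ Set.Ioo (-δ) δ := ⟨by linarith, hδpos⟩
  have hgd : DifferentiableAt ℝ (gradient E) θ₀ := (hg1.differentiable one_ne_zero) θ₀
  have hchain : HasDerivAt (fun t => gradient E (f t))
      (fderiv ℝ (gradient E) θ₀ (-(gradient E θ₀))) 0 := by
    have h0 : HasDerivAt f (-(gradient E (f 0))) 0 := hderiv 0 (Ioo_subset_Icc_self hmem0)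
    have hgd' : HasFDerivAt (gradient E) (fderiv ℝ (gradient E) θ₀) (f 0) := by
      rw [hf0]; exact hgd.hasFDerivAt
    have := hgd'.comp_hasDerivAt 0 h0
    rw [hf0] at this
    exact this
  have hconst : HasDerivAt (fun t => gradient E (f t)) 0 0 := by
    have heq : (fun t => gradient E (f t)) =ᶠ[nhds (0:ℝ)] (fun _ => -v) := by
      filter_upwards [Ioo_mem_nhds hmem0.1 hmem0.2] with s hs using key s hs
    exact (hasDerivAt_const 0 (-v)).congr_of_eventuallyEq heq
  have hHgneg : fderiv ℝ (gradient E) θ₀ (-(gradient E θ₀)) = 0 := hchain.unique hconst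
  have hHg : fderiv ℝ (gradient E) θ₀ (gradient E θ₀) = 0 := by
    have := hHgneg
    rw [map_neg] at this
    simpa [neg_eq_zero] using this
  -- symmetry of the second derivative
  have hsymm : ∀ u w : P, ⟪fderiv ℝ (gradient E) θ₀ u, w⟫_ℝ = ⟪fderiv ℝ (gradient E) θ₀ w, u⟫_ℝ := by
    have hiso : fderiv ℝ (gradient E) θ₀ =
        ((toDual ℝ P).symm.toContinuousLinearEquiv :
          (P →L[ℝ] ℝ) ≃L[ℝ] P).toContinuousLinearMap ∘L fderiv ℝ (fderiv ℝ E) θ₀ := by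
      rw [← ContinuousLinearEquiv.comp_fderiv]; rfl
    have hsym := (hE.contDiffAt (x := θ₀)).isSymmSndFDerivAt (by simp [minSmoothness_of_isRCLikeNormedField])
    intro u w
    rw [hiso]
    simp only [ContinuousLinearMap.coe_comp', Function.comp_apply,
      ContinuousLinearEquiv.coe_coe, LinearIsometryEquiv.coe_toContinuousLinearEquiv]
    rw [toDual_symm_apply, toDual_symm_apply]
    exact hsym.eq u w
  -- compute the fderiv of ‖gradient E ·‖²
  have hF : HasFDerivAt (fun x => ‖gradient E x‖ ^ 2) (0 : P →L[ℝ] ℝ) θ₀ := by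
    have hinner : HasFDerivAt (fun x => ⟪gradient E x, gradient E x⟫_ℝ)
        ((fderivInnerCLM ℝ (gradient E θ₀, gradient E θ₀)).comp
          ((fderiv ℝ (gradient E) θ₀).prod (fderiv ℝ (gradient E) θ₀))) θ₀ :=
      hgd.hasFDerivAt.inner ℝ hgd.hasFDerivAt
    have hzero : ((fderivInnerCLM ℝ (gradient E θ₀, gradient E θ₀)).comp
        ((fderiv ℝ (gradient E) θ₀).prod (fderiv ℝ (gradient E) θ₀))) = 0 := by
      ext w
      simp only [ContinuousLinearMap.coe_comp', Function.comp_apply,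
        ContinuousLinearMap.prod_apply, fderivInnerCLM_apply, ContinuousLinearMap.zero_apply]
      have h1 : ⟪(fderiv ℝ (gradient E) θ₀) w, gradient E θ₀⟫_ℝ = 0 := by
        rw [hsymm w (gradient E θ₀), hHg, inner_zero_left]
      have h2 : ⟪gradient E θ₀, (fderiv ℝ (gradient E) θ₀) w⟫_ℝ = 0 := by
        rw [real_inner_comm]; exact h1
      rw [h1, h2, add_zero]
    rw [hzero] at hinner
    have : (fun x => ⟪gradient E x, gradient E x⟫_ℝ) = (fun x => ‖gradient E x‖ ^ 2) := by
      funext x; rw [real_inner_self_eq_norm_sq]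
    rwa [this] at hinner
  have : HasGradientAt (fun x => ‖gradient E x‖ ^ 2) ((toDual ℝ P).symm 0) θ₀ :=
    (hasFDerivAt_iff_hasGradientAt).mp hF
  simpa using this.gradient
end

section
/- Let E : ℝⁿ → ℝ be twice continuously differentiable with gradient g, let U ⊆ ℝⁿ be an open corridor for E, let h > 0 and θ₀ ∈ U, and define the gradient descent iterates θ_{k+1} = θ_k - h • g(θ_k). If the segment {θ₀ - s • g(θ₀) : s ∈ [0, n h]} lies in U, then the loss decreases linearly along the iterates: E(θ_k) = E(θ₀) - k h ‖g(θ₀)‖² for every k ≤ n. -/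
open Set

/-- Key local lemma: near a point of `U`, the gradient flow exists and (by the corridor
property) is a straight line, along which the gradient is constant. -/
lemma gradient_locally_constant {m : ℕ}
    (E : EuclideanSpace ℝ (Fin m) → ℝ) (hE : ContDiff ℝ 2 E)
    (U : Set (EuclideanSpace ℝ (Fin m))) (hU : IsOpen U) (hcor : IsCorridor E U)
    (x : EuclideanSpace ℝ (Fin m)) (hx : x ∈ U) :
    ∃ δ > (0:ℝ), ∀ t ∈ Ioo (-δ) δ,
      gradient E (x - t • gradient E x) = gradient E x := by
  have hg1 : ContDiff ℝ 1 (gradient E) := by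
    have : ContDiff ℝ 1 (fderiv ℝ E) := hE.fderiv_right (by norm_num)
    exact ((InnerProductSpace.toDual ℝ (EuclideanSpace ℝ (Fin m))).symm.toContinuousLinearEquiv.contDiff).comp this
  have hv : ContDiff ℝ 1 (fun y => -(gradient E y)) := hg1.neg
  obtain ⟨f, hf0, ε, hε, hf⟩ :=
    ContDiffAt.exists_forall_mem_closedBall_exists_eq_forall_mem_Ioo_hasDerivAt₀ (f := fun y => -(gradient E y)) (x₀ := x) hv.contDiffAt (0:ℝ)
  -- f is continuous at 0 and f 0 = x ∈ U, so shrink to δ with f '' Icc(-δ,δ) ⊆ U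
  have hcont : ContinuousAt f 0 :=
    (hf 0 ⟨by linarith, by linarith⟩).continuousAt
  have hUn : ∀ᶠ t in nhds (0:ℝ), f t ∈ U := hcont (hU.mem_nhds (hf0 ▸ hx))
  obtain ⟨δ₀, hδ₀, hδU⟩ := Metric.eventually_nhds_iff.mp hUn
  set δ : ℝ := min (δ₀/2) (ε/2) with hδdef
  have hδpos : 0 < δ := lt_min (by linarith) (by linarith)
  have hmin2 : δ ≤ ε/2 := min_le_right _ _
  have hsubI : Icc (-δ) δ ⊆ Ioo (-ε) ε := fun t ht => by
    have h1 := ht.1; have h2 := ht.2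
    constructor <;> [linarith; linarith]
  have hderiv : ∀ t ∈ Icc (-δ) δ, HasDerivAt f (-(gradient E (f t))) t := by
    intro t ht
    have := hf t (by simpa [sub_eq_add_neg, add_comm, zero_sub, zero_add] using hsubI ht)
    simpa using this
  have hmem : ∀ t ∈ Icc (-δ) δ, f t ∈ U := by
    intro t ht
    apply hδU
    simp only [dist_zero_right, Real.norm_eq_abs]
    have h1 := ht.1; have h2 := ht.2
    have : δ ≤ δ₀/2 := min_le_left _ _
    rw [abs_lt]; constructor <;> linarith
  obtain ⟨v, hfv⟩ := hcor (-δ) δ (by linarith) f hderiv hmem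
  -- at interior points, the derivative of f is v; uniqueness identifies v with -∇E(f t)
  have hline : ∀ t ∈ Ioo (-δ) δ, HasDerivAt f v t := by
    intro t ht
    have haff : HasDerivAt (fun s => f (-δ) + (s - (-δ)) • v) v t := by
      have : HasDerivAt (fun s : ℝ => (s - (-δ)) • v) v t := by
        simpa using ((hasDerivAt_id t).sub_const (-δ)).smul_const v
      simpa using this.const_add (f (-δ))
    apply haff.congr_of_eventuallyEq
    filter_upwards [Ioo_mem_nhds ht.1 ht.2] with s hs
    exact hfv s (Ioo_subset_Icc_self hs)
  have hveq : ∀ t ∈ Ioo (-δ) δ, v = -(gradient E (f t)) := by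
    intro t ht
    exact (hline t ht).unique (hderiv t (Ioo_subset_Icc_self ht))
  have hv0 : v = -(gradient E x) := by
    have := hveq 0 (by constructor <;> simpa using hδpos)
    rwa [hf0] at this
  -- f t = x + t • v = x - t • gradient E x
  have hft : ∀ t ∈ Ioo (-δ) δ, f t = x - t • gradient E x := by
    intro t ht
    have h1 := hfv t (Ioo_subset_Icc_self ht)
    have h2 := hfv 0 ⟨by linarith, by linarith⟩
    rw [hf0] at h2
    have hf0' : f (-δ) = x - (0 - (-δ)) • v := by
      rw [eq_sub_iff_add_eq, ← h2]
    rw [h1, hf0', hv0]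
    simp only [zero_sub, neg_neg, smul_neg, sub_neg_eq_add]
    module
  refine ⟨δ, hδpos, fun t ht => ?_⟩
  have := hveq t ht
  rw [hft t ht] at this
  rw [hv0] at this
  exact (neg_injective this).symm

/-- **Linear loss decrease along gradient descent in corridors.** Let `U` be
an open corridor for `E` with gradient `g`, let `h > 0` and `θ₀ ∈ U`, and define the
gradient descent iterates `θ_{k+1} = θ_k - h • g(θ_k)`. If the segment
`{θ₀ - s • g(θ₀) : s ∈ [0, n h]}` lies in `U`, then the loss decreases linearly along the
iterates: `E(θ_k) = E(θ₀) - k h ‖g(θ₀)‖²` for every `k ≤ n`. -/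
theorem loss_linear_along_gd_in_corridor {m : ℕ}
    (E : EuclideanSpace ℝ (Fin m) → ℝ) (hE : ContDiff ℝ 2 E)
    (U : Set (EuclideanSpace ℝ (Fin m))) (hU : IsOpen U) (hcor : IsCorridor E U)
    (h : ℝ) (hh : 0 < h)
    (θ₀ : EuclideanSpace ℝ (Fin m)) (hθ₀ : θ₀ ∈ U)
    (θs : ℕ → EuclideanSpace ℝ (Fin m))
    (hθs0 : θs 0 = θ₀)
    (hrec : ∀ k : ℕ, θs (k + 1) = θs k - h • gradient E (θs k))
    (n : ℕ)
    (hseg : ∀ s ∈ Set.Icc (0 : ℝ) ((n : ℝ) * h), θ₀ - s • gradient E θ₀ ∈ U) :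
    ∀ k ≤ n, E (θs k) = E θ₀ - (k : ℝ) * h * ‖gradient E θ₀‖ ^ 2 := by
  set g := gradient E with hg
  set φ : ℝ → EuclideanSpace ℝ (Fin m) := fun s => θ₀ - s • g θ₀ with hφ
  set T : ℝ := (n : ℝ) * h with hT
  have hT0 : 0 ≤ T := by positivity
  have hgcont : Continuous g := by
    have h1 : ContDiff ℝ 1 (fderiv ℝ E) := hE.fderiv_right (by norm_num)
    exact ((InnerProductSpace.toDual ℝ (EuclideanSpace ℝ (Fin m))).symm.toContinuousLinearEquiv.contDiff).comp h1 |>.continuous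
  -- Main claim: gradient is constant along the segment
  have hkey : ∀ s ∈ Icc (0:ℝ) T, g (φ s) = g θ₀ := by
    by_contra hcon
    push_neg at hcon
    obtain ⟨s₀, hs₀, hne⟩ := hcon
    -- consider the infimum of bad points
    set A : Set ℝ := {s ∈ Icc (0:ℝ) T | g (φ s) ≠ g θ₀} with hA
    have hAne : A.Nonempty := ⟨s₀, hs₀, hne⟩
    have hAbdd : BddBelow A := ⟨0, fun x hx => hx.1.1⟩
    set c : ℝ := sInf A with hc
    have hcmem : c ∈ Icc (0:ℝ) T := by
      constructor
      · exact le_csInf hAne fun x hx => hx.1.1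
      · exact le_trans (csInf_le hAbdd ⟨hs₀, hne⟩) hs₀.2
    -- all points in [0, c) are good
    have hgood : ∀ r ∈ Ico (0:ℝ) c, g (φ r) = g θ₀ := by
      intro r hr
      by_contra hbad
      have : c ≤ r := csInf_le hAbdd ⟨⟨hr.1, le_trans hr.2.le hcmem.2⟩, hbad⟩
      linarith [hr.2]
    -- g (φ c) = g θ₀ by continuity (limit from the left, or c = 0)
    have hgc : g (φ c) = g θ₀ := by
      rcases eq_or_lt_of_le hcmem.1 with h0 | h0
      · rw [← h0]; simp [hφ]
      · -- continuity: g ∘ φ is continuous, equals g θ₀ on [0, c)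
        have hcont : ContinuousAt (fun s => g (φ s)) c :=
          (hgcont.comp (by fun_prop : Continuous φ)).continuousAt
        have htend : Filter.Tendsto (fun s => g (φ s)) (nhdsWithin c (Iio c)) (nhds (g (φ c))) :=
          hcont.continuousWithinAt
        have heq : ∀ᶠ s in nhdsWithin c (Iio c), (fun s => g (φ s)) s = g θ₀ := by
          filter_upwards [Ico_mem_nhdsLT h0] with s hs
          exact hgood s hs
        have h2 : Filter.Tendsto (fun _ : ℝ => g θ₀) (nhdsWithin c (Iio c)) (nhds (g θ₀)) :=
          tendsto_const_nhds
        have hne' : (nhdsWithin c (Iio c)).NeBot := nhdsLT_neBot c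
        exact tendsto_nhds_unique (htend.congr' heq) h2
    -- local constancy at φ c gives good points past c, contradiction
    obtain ⟨δ, hδ, hloc⟩ := gradient_locally_constant E hE U hU hcor (φ c) (hseg c hcmem)
    rw [← hg] at hloc
    have hext : ∀ t ∈ Ioo (-δ) δ, g (φ (c + t)) = g θ₀ := by
      intro t ht
      have := hloc t ht
      rw [hgc] at this
      have hpt : φ c - t • g θ₀ = φ (c + t) := by
        simp only [hφ]; module
      rw [hpt] at this
      exact this
    -- now every point of A is ≥ c + δ/2... derive contradiction
    have hlb : ∀ x ∈ A, c + δ/2 ≤ x ∨ x < c + δ/2 := fun x _ => le_or_gt _ _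
    have : c + δ/2 ≤ sInf A ∨ ∃ x ∈ A, x < c + δ/2 := by
      rcases lt_or_ge (sInf A) (c + δ/2) with hlt | hge
      · right
        obtain ⟨x, hxA, hx⟩ := exists_lt_of_csInf_lt hAne hlt
        exact ⟨x, hxA, hx⟩
      · left; exact hge
    rcases this with hge | ⟨x, hxA, hx⟩
    · rw [← hc] at hge; linarith
    · have hxc : c ≤ x := csInf_le hAbdd hxA
      have : g (φ x) = g θ₀ := by
        rcases eq_or_lt_of_le hxc with he | hlt
        · rw [← he]; exact hgc
        · have : x - c ∈ Ioo (-δ) δ := ⟨by linarith, by linarith⟩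
          have := hext (x - c) this
          simpa using this
      exact hxA.2 this
  -- E ∘ φ has derivative -‖g θ₀‖² on the segment
  have hEdiff : Differentiable ℝ E := hE.differentiable (by norm_num)
  have hδφ : ∀ s : ℝ, HasDerivAt φ (-(g θ₀)) s := by
    intro s
    have : HasDerivAt (fun s : ℝ => s • g θ₀) (g θ₀) s := by
      simpa using (hasDerivAt_id s).smul_const (g θ₀)
    simpa [hφ, sub_eq_add_neg] using (this.const_sub θ₀)
  have hψ : ∀ s ∈ Icc (0:ℝ) T, HasDerivAt (fun s => E (φ s)) (-‖g θ₀‖^2) s := by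
    intro s hs
    have hfd : HasFDerivAt E (fderiv ℝ E (φ s)) (φ s) := (hEdiff (φ s)).hasFDerivAt
    have hcomp := hfd.comp_hasDerivAt s (hδφ s)
    have : fderiv ℝ E (φ s) (-(g θ₀)) = -‖g θ₀‖^2 := by
      have h1 : fderiv ℝ E (φ s) (-(g θ₀)) = inner ℝ (g (φ s)) (-(g θ₀)) := by
        rw [hg, gradient]
        exact (InnerProductSpace.toDual_symm_apply).symm
      rw [h1, hkey s hs, inner_neg_right, real_inner_self_eq_norm_sq]
    rwa [this] at hcomp
  -- the function ψ s = E (φ s) + s‖gθ₀‖² is constant on [0,T]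
  have hconst : ∀ s ∈ Icc (0:ℝ) T, E (φ s) + s * ‖g θ₀‖^2 = E θ₀ := by
    have h1 : ∀ x ∈ Ico (0:ℝ) T,
        HasDerivWithinAt (fun s => E (φ s) + s * ‖g θ₀‖^2) 0 (Ici x) x := by
      intro x hx
      have := (hψ x ⟨hx.1, hx.2.le⟩).add
        ((hasDerivAt_id x).mul_const (‖g θ₀‖^2))
      exact this.hasDerivWithinAt.congr_deriv (by simp)
    have h2 : ContinuousOn (fun s => E (φ s) + s * ‖g θ₀‖^2) (Icc 0 T) := by
      apply Continuous.continuousOn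
      exact ((hE.continuous).comp (by fun_prop)).add (by fun_prop)
    intro s hs
    have := constant_of_has_deriv_right_zero h2 h1 s hs
    simpa [hφ] using this
  -- the iterates lie on the segment: θs k = φ (k h) for k ≤ n
  have hiter : ∀ k ≤ n, θs k = φ ((k:ℝ) * h) := by
    intro k hk
    induction k with
    | zero => simp [hθs0, hφ]
    | succ j ih =>
      have hj : j ≤ n := Nat.le_of_succ_le hk
      have hjmem : (j:ℝ) * h ∈ Icc (0:ℝ) T := by
        constructor
        · positivity
        · rw [hT]
          have : (j:ℝ) ≤ n := by exact_mod_cast hj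
          nlinarith
      rw [hrec j, ih hj, hkey _ hjmem]
      simp only [hφ]
      push_cast
      module
  intro k hk
  have hkmem : (k:ℝ) * h ∈ Icc (0:ℝ) T := by
    constructor
    · positivity
    · rw [hT]
      have : (k:ℝ) ≤ n := by exact_mod_cast hk
      nlinarith
  have := hconst ((k:ℝ) * h) hkmem
  rw [hiter k hk]
  linarith
end

section
/- Let E : ℝⁿ → ℝ be twice continuously differentiable with gradient g, let U ⊆ ℝⁿ be an open corridor for E, let h > 0, β ∈ (0,1), and θ₀ ∈ U. Consider the heavy-ball momentum iterates v₀ = 0, v_t = β v_{t-1} - h • g(θ_{t-1}), θ_t = θ_{t-1} + v_t, and assume all iterates and the segments between consecutive iterates remain in U. Then every momentum iterate lies on the line of steepest descent through θ₀: for each t there exists s_t ≥ 0 with θ_t = θ₀ - s_t • g(θ₀), namely s_t = (h/(1-β)) ∑_{i=1}^{t} (1 - β^i); consequently momentum follows the same straight-line trajectory as the gradient flow through θ₀, traveled at a different speed. -/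
open Set

lemma grad_local_const {n : ℕ} {E : EuclideanSpace ℝ (Fin n) → ℝ}
    (hg : ContDiff ℝ 1 (fun x => -(gradient E x)))
    {U : Set (EuclideanSpace ℝ (Fin n))} (hU : IsOpen U) (hcor : IsCorridor E U)
    {p : EuclideanSpace ℝ (Fin n)} (hp : p ∈ U) :
    ∃ δ > (0:ℝ), ∀ t : ℝ, |t| < δ →
      gradient E (p - t • gradient E p) = gradient E p := by
  obtain ⟨f, hf0, ε, hε, hf⟩ :=
    ContDiffAt.exists_forall_mem_closedBall_exists_eq_forall_mem_Ioo_hasDerivAt₀ (x₀ := p) hg.contDiffAt (0 : ℝ)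
  -- continuity of f at 0
  have hcont : ContinuousAt f 0 :=
    (hf 0 (by constructor <;> simp [hε, hε.le] <;> linarith)).continuousAt
  have hUnhds : U ∈ nhds (f 0) := hU.mem_nhds (by rw [hf0]; exact hp)
  obtain ⟨δ₁, hδ₁, hδ₁U⟩ := Metric.eventually_nhds_iff_ball.mp
    (hcont.eventually_mem hUnhds)
  set δ : ℝ := min (ε / 2) (δ₁ / 2) with hδdef
  have hδ : 0 < δ := lt_min (by linarith) (by linarith)
  have hδε : δ < ε := lt_of_le_of_lt (min_le_left _ _) (by linarith)
  have hδ₁' : δ < δ₁ := lt_of_le_of_lt (min_le_right _ _) (by linarith)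
  have hsub : Set.Icc (-δ) δ ⊆ Set.Ioo (0 - ε) (0 + ε) := by
    intro t ht; constructor <;> cases ht <;> [linarith; linarith]
  obtain ⟨w, hw⟩ := hcor (-δ) δ (by linarith) f
    (fun t ht => hf t (hsub ht))
    (fun t ht => hδ₁U t (by
      rw [Metric.mem_ball, Real.dist_eq, sub_zero]
      exact lt_of_le_of_lt (abs_le.mpr ⟨ht.1, ht.2⟩) hδ₁'))
  -- f has derivative w at every interior point
  have hder : ∀ t ∈ Set.Ioo (-δ) δ, HasDerivAt f w t := by
    intro t ht
    have haff : HasDerivAt (fun u : ℝ => f (-δ) + (u - (-δ)) • w) w t := by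
      simpa using (((hasDerivAt_id t).sub_const (-δ)).smul_const w).const_add (f (-δ))
    refine haff.congr_of_eventuallyEq ?_
    filter_upwards [Ioo_mem_nhds ht.1 ht.2] with u hu
    exact hw u (Ioo_subset_Icc_self hu)
  have h0mem : (0:ℝ) ∈ Set.Ioo (-δ) δ := ⟨by linarith, hδ⟩
  have hw0 : w = -(gradient E p) := by
    have := (hder 0 h0mem).unique (hf 0 (hsub (Ioo_subset_Icc_self h0mem)))
    rw [hf0] at this; exact this
  refine ⟨δ, hδ, fun t ht => ?_⟩
  have htmem : t ∈ Set.Ioo (-δ) δ := ⟨(abs_lt.mp ht).1, (abs_lt.mp ht).2⟩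
  have hw0' : gradient E p = -w := by rw [hw0, neg_neg]
  have hft : f t = p - t • gradient E p := by
    have h1 := hw t (Ioo_subset_Icc_self htmem)
    have h2 := hw 0 (Ioo_subset_Icc_self h0mem)
    have hp' : p = f (-δ) + δ • w := by
      rw [← hf0, h2]; norm_num
    rw [h1, hw0', hp']
    module
  have huniq := (hder t htmem).unique (hf t (hsub (Ioo_subset_Icc_self htmem)))
  rw [hft, hw0] at huniq
  exact (neg_injective huniq).symm

lemma grad_const_on_line {n : ℕ} {E : EuclideanSpace ℝ (Fin n) → ℝ}
    (hg : ContDiff ℝ 1 (fun x => -(gradient E x)))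
    {U : Set (EuclideanSpace ℝ (Fin n))} (hU : IsOpen U) (hcor : IsCorridor E U)
    (θ₀ : EuclideanSpace ℝ (Fin n)) {S : ℝ} (hS : 0 ≤ S)
    (hline : ∀ s ∈ Set.Icc (0:ℝ) S, θ₀ - s • gradient E θ₀ ∈ U) :
    ∀ s ∈ Set.Icc (0:ℝ) S, gradient E (θ₀ - s • gradient E θ₀) = gradient E θ₀ := by
  set g₀ := gradient E θ₀ with hg₀
  set A : Set ℝ := {m | m ∈ Set.Icc 0 S ∧
    ∀ u ∈ Set.Icc (0:ℝ) m, gradient E (θ₀ - u • g₀) = g₀} with hA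
  have h0A : (0:ℝ) ∈ A := by
    refine ⟨⟨le_refl 0, hS⟩, fun u hu => ?_⟩
    have : u = 0 := le_antisymm hu.2 hu.1
    simp [this, hg₀]
  have hbdd : BddAbove A := ⟨S, fun x hx => hx.1.2⟩
  set m := sSup A with hm
  have hm0 : 0 ≤ m := le_csSup hbdd h0A
  have hmS : m ≤ S := csSup_le ⟨0, h0A⟩ fun x hx => hx.1.2
  have hlt : ∀ u ∈ Set.Ico (0:ℝ) m, gradient E (θ₀ - u • g₀) = g₀ := by
    intro u hu
    obtain ⟨x, hxA, hx⟩ := exists_lt_of_lt_csSup ⟨0, h0A⟩ hu.2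
    exact hxA.2 u ⟨hu.1, hx.le⟩
  have hcg : Continuous fun u : ℝ => gradient E (θ₀ - u • g₀) := by
    have h1 : Continuous fun x : EuclideanSpace ℝ (Fin n) => gradient E x := by
      have := hg.continuous.neg
      exact this.congr fun x => by simp
    exact h1.comp (continuous_const.sub (continuous_id.smul continuous_const))
  have hmA : ∀ u ∈ Set.Icc (0:ℝ) m, gradient E (θ₀ - u • g₀) = g₀ := by
    intro u hu
    rcases lt_or_eq_of_le hu.2 with h2 | h2
    · exact hlt u ⟨hu.1, h2⟩
    · rw [h2]
      rcases eq_or_lt_of_le hm0 with h1 | h1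
      · simp [← h1, hg₀]
      · have hne : (nhdsWithin m (Set.Iio m)).NeBot := nhdsLT_neBot m
        have ht1 : Filter.Tendsto (fun x : ℝ => gradient E (θ₀ - x • g₀))
            (nhdsWithin m (Set.Iio m)) (nhds (gradient E (θ₀ - m • g₀))) :=
          (hcg.tendsto m).mono_left nhdsWithin_le_nhds
        have ht2 : Filter.Tendsto (fun x : ℝ => gradient E (θ₀ - x • g₀))
            (nhdsWithin m (Set.Iio m)) (nhds g₀) := by
          have hev : ∀ᶠ x in nhdsWithin m (Set.Iio m),
              gradient E (θ₀ - x • g₀) = g₀ := by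
            filter_upwards [Ioo_mem_nhdsLT_of_mem (Set.mem_Ioc.mpr ⟨h1, le_refl m⟩)]
              with x hx
            exact hlt x ⟨hx.1.le, hx.2⟩
          exact Filter.Tendsto.congr' (hev.mono fun x hx => hx.symm) tendsto_const_nhds
        exact tendsto_nhds_unique ht1 ht2
  have hmeq : m = S := by
    by_contra hne
    have hmS' : m < S := lt_of_le_of_ne hmS hne
    have hpU : θ₀ - m • g₀ ∈ U := hline m ⟨hm0, hmS⟩
    obtain ⟨δ, hδ, hloc⟩ := grad_local_const hg hU hcor hpU
    have hgp : gradient E (θ₀ - m • g₀) = g₀ := hmA m ⟨hm0, le_refl m⟩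
    set m' := min S (m + δ / 2) with hm'
    have hmm' : m < m' := lt_min hmS' (by linarith)
    have hm'A : m' ∈ A := by
      refine ⟨⟨le_trans hm0 hmm'.le, min_le_left _ _⟩, fun u hu => ?_⟩
      rcases le_or_gt u m with h2 | h2
      · exact hmA u ⟨hu.1, h2⟩
      · have hub : u ≤ m + δ / 2 := le_trans hu.2 (min_le_right _ _)
        have habs : |u - m| < δ := by
          rw [abs_lt]; constructor <;> linarith
        have := hloc (u - m) habs
        rw [hgp] at this
        have heq : θ₀ - m • g₀ - (u - m) • g₀ = θ₀ - u • g₀ := by module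
        rw [heq] at this
        exact this
    exact absurd (le_csSup hbdd hm'A) (not_le.mpr hmm')
  intro s hs
  exact hmA s ⟨hs.1, hmeq ▸ hs.2⟩

/-- **Momentum stays on the line of steepest descent in corridors.** Let `U`
be an open corridor for `E` with gradient `g`, let `h > 0`, `β ∈ (0,1)`, and `θ₀ ∈ U`.
Consider the heavy-ball momentum iterates `v₀ = 0`, `v_t = β v_{t-1} - h • g(θ_{t-1})`,
`θ_t = θ_{t-1} + v_t`, and assume all iterates and the segments between consecutive
iterates remain in `U`. Then every momentum iterate lies on the line of steepest descent
through `θ₀`: for each `t` there exists `s_t ≥ 0` with `θ_t = θ₀ - s_t • g(θ₀)`, namely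
`s_t = (h/(1-β)) ∑_{i=1}^{t} (1 - β^i)`; so momentum follows the same straight-line
trajectory as the gradient flow through `θ₀`, traveled at a different speed. -/
theorem momentum_on_steepest_descent_line {n : ℕ}
    (E : EuclideanSpace ℝ (Fin n) → ℝ) (hE : ContDiff ℝ 2 E)
    (U : Set (EuclideanSpace ℝ (Fin n))) (hU : IsOpen U) (hcor : IsCorridor E U)
    (h β : ℝ) (hh : 0 < h) (hβ : β ∈ Set.Ioo (0 : ℝ) 1)
    (θ₀ : EuclideanSpace ℝ (Fin n)) (hθ₀ : θ₀ ∈ U)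
    (v θs : ℕ → EuclideanSpace ℝ (Fin n))
    (hv0 : v 0 = 0) (hθs0 : θs 0 = θ₀)
    (hv : ∀ t : ℕ, v (t + 1) = β • v t - h • gradient E (θs t))
    (hθs : ∀ t : ℕ, θs (t + 1) = θs t + v (t + 1))
    (hmem : ∀ t : ℕ, θs t ∈ U)
    (hseg : ∀ t : ℕ, ∀ s ∈ Set.Icc (0 : ℝ) 1, θs t + s • (θs (t + 1) - θs t) ∈ U) :
    ∀ t : ℕ, ∃ s : ℝ, 0 ≤ s ∧
      s = h / (1 - β) * ∑ i ∈ Finset.Icc 1 t, (1 - β ^ i) ∧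
      θs t = θ₀ - s • gradient E θ₀ := by
  obtain ⟨hβ0, hβ1⟩ := hβ
  have h1β : 0 < 1 - β := by linarith
  have hg : ContDiff ℝ 1 (fun x => -(gradient E x)) := by
    have h1 : ContDiff ℝ 1 (fderiv ℝ E) := hE.fderiv_right (by norm_num)
    exact (((InnerProductSpace.toDual ℝ (EuclideanSpace ℝ (Fin n))).symm.contDiff).comp h1).neg
  set g₀ := gradient E θ₀ with hg₀
  set c : ℕ → ℝ := fun t => h * (1 - β ^ t) / (1 - β) with hc
  set sf : ℕ → ℝ := fun t => h / (1 - β) * ∑ i ∈ Finset.Icc 1 t, (1 - β ^ i) with hsf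
  have hpow : ∀ i : ℕ, β ^ i ≤ 1 := fun i => pow_le_one₀ hβ0.le hβ1.le
  have hterm : ∀ i : ℕ, 0 ≤ 1 - β ^ i := fun i => by linarith [hpow i]
  have hsfnn : ∀ t, 0 ≤ sf t := fun t =>
    mul_nonneg (div_nonneg hh.le h1β.le) (Finset.sum_nonneg fun i _ => hterm i)
  have hcpos : ∀ t : ℕ, 0 < c (t + 1) := by
    intro t
    have : β ^ (t + 1) < 1 := pow_lt_one₀ hβ0.le hβ1 (Nat.succ_ne_zero t)
    exact div_pos (mul_pos hh (by linarith)) h1β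
  have hcsucc : ∀ t : ℕ, c (t + 1) = β * c t + h := by
    intro t
    simp only [hc]
    field_simp
    ring
  have hssucc : ∀ t : ℕ, sf (t + 1) = sf t + c (t + 1) := by
    intro t
    simp only [hsf, hc]
    rw [Finset.sum_Icc_succ_top (Nat.one_le_iff_ne_zero.mpr (Nat.succ_ne_zero t))]
    field_simp
  have main : ∀ t : ℕ, θs t = θ₀ - sf t • g₀ ∧ v t = -(c t) • g₀ ∧
      ∀ u ∈ Set.Icc (0:ℝ) (sf t), θ₀ - u • g₀ ∈ U := by
    intro t
    induction t with
    | zero =>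
      have hs0 : sf 0 = 0 := by simp [hsf]
      have hc0 : c 0 = 0 := by simp [hc]
      refine ⟨by simp [hs0, hθs0], by simp [hc0, hv0], fun u hu => ?_⟩
      rw [hs0] at hu
      have : u = 0 := le_antisymm hu.2 hu.1
      simp [this, hθ₀]
    | succ t ih =>
      obtain ⟨ihθ, ihv, ihU⟩ := ih
      have hgradt : gradient E (θs t) = g₀ := by
        rw [ihθ]
        exact grad_const_on_line hg hU hcor θ₀ (hsfnn t) ihU (sf t)
          ⟨hsfnn t, le_refl _⟩
      have hv' : v (t + 1) = -(c (t + 1)) • g₀ := by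
        rw [hv t, ihv, hgradt, hcsucc t]
        module
      have hθ' : θs (t + 1) = θ₀ - sf (t + 1) • g₀ := by
        rw [hθs t, ihθ, hv', hssucc t]
        module
      refine ⟨hθ', hv', fun u hu => ?_⟩
      rcases le_or_gt u (sf t) with h2 | h2
      · exact ihU u ⟨hu.1, h2⟩
      · have hub : u ≤ sf t + c (t + 1) := by
          have := hu.2; rw [hssucc t] at this; exact this
        set r : ℝ := (u - sf t) / c (t + 1) with hr
        have hr0 : 0 ≤ r := div_nonneg (by linarith) (hcpos t).le
        have hr1 : r ≤ 1 := (div_le_one (hcpos t)).mpr (by linarith)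
        have hrc : r * c (t + 1) = u - sf t := div_mul_cancel₀ _ (hcpos t).ne'
        have := hseg t r ⟨hr0, hr1⟩
        have heq : θs t + r • (θs (t + 1) - θs t) = θ₀ - u • g₀ := by
          rw [hθs t, add_sub_cancel_left, ihθ, hv']
          have : u = sf t + r * c (t + 1) := by rw [hrc]; ring
          rw [this]
          module
        rw [heq] at this
        exact this
  intro t
  exact ⟨sf t, hsfnn t, rfl, (main t).1⟩
end

section
/- Let E : ℝⁿ → ℝ be twice continuously differentiable with gradient g, and let U ⊆ ℝⁿ be an open corridor for E. For θ ∈ U with the segment {θ - s • g(θ) : s ∈ [0, t]} contained in U, the lift of the line of steepest descent to the loss surface, t ↦ (θ - t • g(θ), E(θ - t • g(θ))) ∈ ℝⁿ × ℝ, is a straight line: it equals t ↦ (θ, E(θ)) + t • (-g(θ), -‖g(θ)‖²). -/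
open Set InnerProductSpace

section aux

variable {n : ℕ}

lemma gradient_contDiff_aux (E : EuclideanSpace ℝ (Fin n) → ℝ) (hE : ContDiff ℝ 2 E) :
    ContDiff ℝ 1 (fun x => -(gradient E x)) := by
  have h1 : ContDiff ℝ 1 (fderiv ℝ E) := hE.fderiv_right (by norm_num)
  have h2 : ContDiff ℝ 1 (gradient E) :=
    ((toDual ℝ (EuclideanSpace ℝ (Fin n))).symm.contDiff).comp h1
  exact h2.neg

lemma hasDerivAt_comp_line (E : EuclideanSpace ℝ (Fin n) → ℝ) (hE : ContDiff ℝ 2 E)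
    (θ g : EuclideanSpace ℝ (Fin n)) (s : ℝ) :
    HasDerivAt (fun u : ℝ => E (θ - u • g))
      (inner ℝ (gradient E (θ - s • g)) (-g) : ℝ) s := by
  have hγ : HasDerivAt (fun u : ℝ => θ - u • g) (-g) s := by
    simpa using ((hasDerivAt_id s).smul_const g).const_sub θ
  have hEd : HasFDerivAt E (fderiv ℝ E (θ - s • g)) (θ - s • g) :=
    ((hE.differentiable (by norm_num)) _).hasFDerivAt
  have := hEd.comp_hasDerivAt s hγ
  have hgrad : fderiv ℝ E (θ - s • g) (-g)
      = (inner ℝ (gradient E (θ - s • g)) (-g) : ℝ) := by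
    rw [← toDual_apply_apply (𝕜 := ℝ)]
    congr 1
    exact ((toDual ℝ (EuclideanSpace ℝ (Fin n))).apply_symm_apply _).symm
  simp [hgrad] at this ⊢
  exact this

/-- Key lemma: in a corridor, the gradient is constant along the steepest-descent segment. -/
lemma gradient_const_on_segment (E : EuclideanSpace ℝ (Fin n) → ℝ) (hE : ContDiff ℝ 2 E)
    (U : Set (EuclideanSpace ℝ (Fin n))) (hU : IsOpen U) (hcor : IsCorridor E U)
    (θ : EuclideanSpace ℝ (Fin n)) (t : ℝ) (ht : 0 ≤ t)
    (hseg : ∀ s ∈ Set.Icc (0 : ℝ) t, θ - s • gradient E θ ∈ U) :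
    ∀ s ∈ Set.Icc (0 : ℝ) t, gradient E (θ - s • gradient E θ) = gradient E θ := by
  set g := gradient E θ with hg
  set γ : ℝ → EuclideanSpace ℝ (Fin n) := fun s => θ - s • g with hγdef
  -- work in the subtype
  haveI : PreconnectedSpace (Icc (0:ℝ) t) := Subtype.preconnectedSpace isPreconnected_Icc
  set S : Set (Icc (0:ℝ) t) := {s | gradient E (γ s) = g} with hS
  have hγcont : Continuous γ := by fun_prop
  have hgc : Continuous (gradient E) := by
    have := (gradient_contDiff_aux E hE).continuous
    have h := this.neg
    exact h.congr (fun x => neg_neg (gradient E x))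
  have hSclosed : IsClosed S := isClosed_eq ((hgc.comp hγcont).comp continuous_subtype_val)
    continuous_const
  have hSopen : IsOpen S := by
    rw [isOpen_iff_mem_nhds]
    rintro ⟨s₀, hs₀⟩ hmem
    -- local solution of the gradient flow through γ s₀
    obtain ⟨f, hf0, ε, hε, hf⟩ :=
      ContDiffAt.exists_forall_mem_closedBall_exists_eq_forall_mem_Ioo_hasDerivAt₀ (x₀ := γ s₀) ((gradient_contDiff_aux E hE).contDiffAt) s₀
    have hfU : f ⁻¹' U ∈ nhds s₀ := by
      have hcont : ContinuousAt f s₀ :=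
        (hf s₀ (Set.mem_Ioo.2 ⟨by linarith, by linarith⟩)).continuousAt
      exact hcont.preimage_mem_nhds (hU.mem_nhds (by rw [hf0]; exact hseg s₀ hs₀))
    obtain ⟨r, hr, hball⟩ := Metric.mem_nhds_iff.1
      (Filter.inter_mem hfU (Ioo_mem_nhds (a := s₀ - ε) (b := s₀ + ε) (by linarith) (by linarith)))
    set δ := min (r/2) (ε/2) with hδdef
    have hδ : 0 < δ := lt_min (by linarith) (by linarith)
    have hIcc_sub : Icc (s₀ - δ) (s₀ + δ) ⊆ Metric.ball s₀ r := by
      intro u hu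
      rw [Metric.mem_ball, Real.dist_eq, abs_lt]
      have h1 : δ ≤ r/2 := min_le_left _ _
      constructor <;> [skip; skip] <;>
        · have := hu.1; have := hu.2; linarith
    have hderiv : ∀ u ∈ Icc (s₀ - δ) (s₀ + δ), HasDerivAt f (-(gradient E (f u))) u := by
      intro u hu
      exact hf u ((hIcc_sub.trans hball) hu).2
    have hinU : ∀ u ∈ Icc (s₀ - δ) (s₀ + δ), f u ∈ U := fun u hu =>
      ((hIcc_sub.trans hball) hu).1
    obtain ⟨v, hv⟩ := hcor (s₀ - δ) (s₀ + δ) (by linarith) f hderiv hinU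
    -- the line through f with velocity v; identify v = -(gradient E (f s₀))
    have hline_deriv : ∀ u ∈ Ioo (s₀ - δ) (s₀ + δ), -(gradient E (f u)) = v := by
      intro u hu
      have hl : HasDerivAt (fun w : ℝ => f (s₀ - δ) + (w - (s₀ - δ)) • v) v u := by
        simpa using (((hasDerivAt_id u).sub_const (s₀ - δ)).smul_const v).const_add
          (f (s₀ - δ))
      have heq : f =ᶠ[nhds u] (fun w : ℝ => f (s₀ - δ) + (w - (s₀ - δ)) • v) := by
        filter_upwards [Ioo_mem_nhds hu.1 hu.2] with w hw
        exact hv w (Ioo_subset_Icc_self hw)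
      exact (hderiv u (Ioo_subset_Icc_self hu)).unique (hl.congr_of_eventuallyEq heq)
    have hs₀mem : s₀ ∈ Ioo (s₀ - δ) (s₀ + δ) := by constructor <;> linarith
    have hveq : v = -g := by
      have := hline_deriv s₀ hs₀mem
      rw [hf0] at this
      rw [← this, hmem]
    -- identify f with γ on the interval
    have hfγ : ∀ u ∈ Icc (s₀ - δ) (s₀ + δ), f u = γ u := by
      intro u hu
      have h1 := hv u hu
      have h2 := hv s₀ (Ioo_subset_Icc_self hs₀mem)
      rw [hf0] at h2
      rw [hveq] at h1 h2
      have hγu : γ u = γ s₀ + (u - s₀) • (-g) := by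
        simp only [hγdef]; module
      rw [h1, hγu, h2]
      module
    -- conclude openness
    have hsub : (Subtype.val : Icc (0:ℝ) t → ℝ) ⁻¹' (Ioo (s₀ - δ) (s₀ + δ)) ⊆ S := by
      rintro ⟨u, hu⟩ huIoo
      have : gradient E (γ u) = gradient E (f u) := by
        rw [hfγ u (Ioo_subset_Icc_self huIoo)]
      simp only [hS, Set.mem_setOf_eq]
      rw [this, ← neg_neg (gradient E (f u)), hline_deriv u huIoo, hveq, neg_neg]
    exact Filter.mem_of_superset
      ((isOpen_Ioo.preimage continuous_subtype_val).mem_nhds hs₀mem) hsub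
  have hne : S.Nonempty := by
    refine ⟨⟨0, by constructor <;> linarith⟩, ?_⟩
    simp [hS, hγdef, hg]
  have := IsClopen.eq_univ ⟨hSclosed, hSopen⟩ hne
  intro s hs
  have : (⟨s, hs⟩ : Icc (0:ℝ) t) ∈ S := this ▸ Set.mem_univ _
  exact this

end aux

/-- **The steepest descent line lifts to a line on the loss surface,
Proposition 2.7.** Let `U` be an open corridor for `E` with gradient `g`. For `θ ∈ U` with
the segment `{θ - s • g(θ) : s ∈ [0, t]}` contained in `U`, the lift of the line of
steepest descent to the loss surface, `s ↦ (θ - s • g(θ), E (θ - s • g(θ))) ∈ ℝⁿ × ℝ`, is a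
straight line: it equals `s ↦ (θ, E θ) + s • (-g(θ), -‖g(θ)‖²)`. -/
theorem steepest_descent_lifts_to_line_on_loss_surface {n : ℕ}
    (E : EuclideanSpace ℝ (Fin n) → ℝ) (hE : ContDiff ℝ 2 E)
    (U : Set (EuclideanSpace ℝ (Fin n))) (hU : IsOpen U) (hcor : IsCorridor E U)
    (θ : EuclideanSpace ℝ (Fin n)) (hθ : θ ∈ U)
    (t : ℝ) (ht : 0 ≤ t)
    (hseg : ∀ s ∈ Set.Icc (0 : ℝ) t, θ - s • gradient E θ ∈ U) :
    ∀ s ∈ Set.Icc (0 : ℝ) t,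
      ((θ - s • gradient E θ, E (θ - s • gradient E θ)) :
          EuclideanSpace ℝ (Fin n) × ℝ) =
        (θ, E θ) + s • (-(gradient E θ), -‖gradient E θ‖ ^ 2) := by
  have key := gradient_const_on_segment E hE U hU hcor θ t ht hseg
  set g := gradient E θ with hg
  -- the value of E along the segment
  have hEval : ∀ s ∈ Set.Icc (0 : ℝ) t, E (θ - s • g) = E θ - s * ‖g‖ ^ 2 := by
    set F : ℝ → ℝ := fun s => E (θ - s • g) + s * ‖g‖ ^ 2 with hF
    have hFcont : ContinuousOn F (Set.Icc 0 t) := by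
      apply Continuous.continuousOn
      have : Continuous fun s : ℝ => θ - s • g := by fun_prop
      exact ((hE.continuous.comp this).add (continuous_id.mul continuous_const))
    have hFderiv : ∀ s ∈ Set.Ico (0:ℝ) t, HasDerivWithinAt F 0 (Set.Ici s) s := by
      intro s hs
      have h1 := hasDerivAt_comp_line E hE θ g s
      rw [key s (Set.mem_Icc_of_Ico hs)] at h1
      have hval : (inner ℝ g (-g) : ℝ) = -‖g‖^2 := by
        rw [inner_neg_right, real_inner_self_eq_norm_sq]
      rw [hval] at h1
      have h2 : HasDerivAt F 0 s := by
        have := h1.add ((hasDerivAt_id s).mul_const (‖g‖^2))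
        simp at this
        exact this
      exact h2.hasDerivWithinAt
    have := constant_of_has_deriv_right_zero hFcont hFderiv
    intro s hs
    have h0 : F 0 = E θ := by simp [hF]
    have := this s hs
    rw [h0, hF] at this
    simp only at this
    linarith
  intro s hs
  have h1 : θ - s • g = θ + s • (-g) := by module
  have h2 := hEval s hs
  rw [Prod.ext_iff]
  constructor
  · simpa using h1
  · simp only [Prod.snd_add, Prod.smul_snd, smul_eq_mul]
    rw [h2]; ring
end
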